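/- Let L ≥ 2. The ZMod 2-linear map sending an X-error F : V × Fin 3 → ZMod 2 to the pair of cell syndromes (σ₁(F), σ₂(F)) has rank 2L³ − 3L + 1. (Together with the rank L³ − 3L + 2 of the vertex syndrome map, this gives 3L³ − (L³ − 3L + 2) − (2L³ − 3L + 1) = 6L − 3 encoded logical qubits for the X-cube model on an L × L × L torus, matching the paper's count of logical operator pairs X̄_j, Z̄_j for 1 ≤ j ≤ 6L − 3.) -/

import Mathlib

/-- Positions on the periodic cubic lattice of linear size `L`. -/
abbrev V (L : ℕ) : Type := Fin 3 → ZMod L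

/-- The standard basis vector in direction `i`. -/
def e (L : ℕ) (i : Fin 3) : V L := Pi.single i 1

/-- The two directions/colors different from a given one. -/
def oth : Fin 3 → Fin 3 × Fin 3 := ![(1, 2), (0, 2), (0, 1)]

/-- The `c`-colored cell syndrome of an X-error `F` at the cell `p`. -/
def cellSyn (L : ℕ) (F : V L × Fin 3 → ZMod 2) (c : Fin 3) (p : V L) : ZMod 2 :=
  ∑ i ∈ Finset.univ.filter (fun i : Fin 3 => i ≠ c), (F (p, i) + F (p + e L i, i))

/-- The vertex syndrome of a Z-error `E` at the vertex `v`. -/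
def vertSyn (L : ℕ) (E : V L × Fin 3 → ZMod 2) (v : V L) : ZMod 2 :=
  ∑ i : Fin 3, ∑ a : Fin 2, ∑ b : Fin 2,
    E (v - ((a : ℕ) : ZMod L) • e L (oth i).1 - ((b : ℕ) : ZMod L) • e L (oth i).2, i)

/-- The cell syndrome map `F ↦ (σ₁(F), σ₂(F))` as a `ZMod 2`-linear map. -/
def cellSynMap (L : ℕ) :
    (V L × Fin 3 → ZMod 2) →ₗ[ZMod 2] ((V L → ZMod 2) × (V L → ZMod 2)) where
  toFun F := (cellSyn L F 1, cellSyn L F 2)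
  map_add' F F' := by
    refine Prod.ext ?_ ?_ <;> funext p <;>
      simp [cellSyn, Finset.sum_add_distrib, add_add_add_comm]
  map_smul' c F := by
    refine Prod.ext ?_ ?_ <;> funext p <;>
      simp [cellSyn, Finset.smul_sum, Finset.mul_sum, mul_add]

open Module LinearMap Finset

/-- The standard self-duality of a finite power of `ZMod 2`. -/
def piDual (ι : Type*) [Fintype ι] [DecidableEq ι] :
    (ι → ZMod 2) ≃ₗ[ZMod 2] Module.Dual (ZMod 2) (ι → ZMod 2) where
  toFun x :=
    { toFun := fun y => ∑ i, x i * y i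
      map_add' := by intro y z; simp [mul_add, Finset.sum_add_distrib]
      map_smul' := by intro c y; simp [Finset.mul_sum, mul_left_comm] }
  map_add' x x' := by
    ext y; simp [add_mul, Finset.sum_add_distrib]
  map_smul' c x := by
    ext y; simp [Finset.mul_sum, mul_assoc]
  invFun φ := fun i => φ (Pi.single i 1)
  left_inv x := by
    funext i
    dsimp
    simp [Pi.single_apply, mul_ite]
  right_inv φ := by
    refine LinearMap.ext fun y => ?_
    dsimp
    have h1 : ∀ i, φ (Pi.single i 1) * y i = φ (Pi.single i (y i)) := by
      intro i
      rw [mul_comm, ← smul_eq_mul, ← φ.map_smul]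
      congr 1
      funext k
      by_cases h : k = i <;> simp [Pi.single_apply, h]
    simp_rw [h1, ← map_sum φ, Finset.univ_sum_single]

theorem piDual_apply (ι : Type*) [Fintype ι] [DecidableEq ι] (x y : ι → ZMod 2) :
    piDual ι x y = ∑ i, x i * y i := rfl

/-- The transpose of the cell-syndrome map. -/
def Tmap (L : ℕ) : ((V L → ZMod 2) × (V L → ZMod 2)) →ₗ[ZMod 2] (V L × Fin 3 → ZMod 2) where
  toFun g := fun qi =>
    if qi.2 = 0 then g.1 qi.1 + g.1 (qi.1 - e L 0) + g.2 qi.1 + g.2 (qi.1 - e L 0)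
    else if qi.2 = 1 then g.2 qi.1 + g.2 (qi.1 - e L 1)
    else g.1 qi.1 + g.1 (qi.1 - e L 2)
  map_add' g h := by
    funext qi
    simp only [Prod.fst_add, Prod.snd_add, Pi.add_apply]
    split_ifs <;> ring
  map_smul' c g := by
    funext qi
    simp only [Prod.smul_fst, Prod.smul_snd, Pi.smul_apply, smul_eq_mul, RingHom.id_apply]
    split_ifs <;> ring

/-- The parametrization of the kernel of `Tmap`. -/
def Phi (L : ℕ) : (Fin 3 → ZMod L → ZMod 2) →ₗ[ZMod 2] ((V L → ZMod 2) × (V L → ZMod 2)) where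
  toFun f := (fun p => f 0 (p 0) + f 1 (p 1), fun p => f 0 (p 0) + f 2 (p 2))
  map_add' f f' := by
    refine Prod.ext ?_ ?_ <;> funext p <;>
      simp only [Pi.add_apply, Prod.fst_add, Prod.snd_add] <;> ring
  map_smul' c f := by
    refine Prod.ext ?_ ?_ <;> funext p <;>
      simp only [Pi.smul_apply, smul_eq_mul, RingHom.id_apply, Prod.smul_fst, Prod.smul_snd,
        Prod.fst, Prod.snd] <;> ring

section
variable (L : ℕ) [NeZero L]

theorem cellSyn_one (F : V L × Fin 3 → ZMod 2) (p : V L) :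
    cellSyn L F 1 p = (F (p, 0) + F (p + e L 0, 0)) + (F (p, 2) + F (p + e L 2, 2)) := by
  rw [cellSyn, show Finset.univ.filter (fun i : Fin 3 => i ≠ 1) = {0, 2} from by decide]
  simp

theorem cellSyn_two (F : V L × Fin 3 → ZMod 2) (p : V L) :
    cellSyn L F 2 p = (F (p, 0) + F (p + e L 0, 0)) + (F (p, 1) + F (p + e L 1, 1)) := by
  rw [cellSyn, show Finset.univ.filter (fun i : Fin 3 => i ≠ 2) = {0, 1} from by decide]
  simp

theorem shift_pair (h : V L) (g f : V L → ZMod 2) :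
    ∑ p : V L, g p * f (p + h) = ∑ q : V L, g (q - h) * f q := by
  refine Fintype.sum_equiv (Equiv.addRight h) _ _ fun p => ?_
  simp

theorem star_identity (g : (V L → ZMod 2) × (V L → ZMod 2)) (F : V L × Fin 3 → ZMod 2) :
    (∑ p : V L, g.1 p * cellSyn L F 1 p) + (∑ p : V L, g.2 p * cellSyn L F 2 p)
      = ∑ qi : V L × Fin 3, Tmap L g qi * F qi := by
  have hR : ∑ qi : V L × Fin 3, Tmap L g qi * F qi
      = (∑ q : V L, (g.1 q + g.1 (q - e L 0) + g.2 q + g.2 (q - e L 0)) * F (q, 0))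
        + (∑ q : V L, (g.2 q + g.2 (q - e L 1)) * F (q, 1))
        + (∑ q : V L, (g.1 q + g.1 (q - e L 2)) * F (q, 2)) := by
    rw [Fintype.sum_prod_type]
    rw [← Finset.sum_add_distrib, ← Finset.sum_add_distrib]
    refine Finset.sum_congr rfl fun q _ => ?_
    rw [Fin.sum_univ_three]
    simp [Tmap]
  rw [hR]
  simp only [cellSyn_one, cellSyn_two, mul_add, add_mul, Finset.sum_add_distrib]
  rw [shift_pair L (e L 0) g.1 (fun q => F (q, 0)), shift_pair L (e L 2) g.1 (fun q => F (q, 2)),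
    shift_pair L (e L 0) g.2 (fun q => F (q, 0)), shift_pair L (e L 1) g.2 (fun q => F (q, 1))]
  ring

end
theorem Tmap_a0 (L : ℕ) (g : (V L → ZMod 2) × (V L → ZMod 2)) (q : V L) :
    Tmap L g (q, 0) = g.1 q + g.1 (q - e L 0) + g.2 q + g.2 (q - e L 0) := rfl

theorem Tmap_a1 (L : ℕ) (g : (V L → ZMod 2) × (V L → ZMod 2)) (q : V L) :
    Tmap L g (q, 1) = g.2 q + g.2 (q - e L 1) := rfl

theorem Tmap_a2 (L : ℕ) (g : (V L → ZMod 2) × (V L → ZMod 2)) (q : V L) :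
    Tmap L g (q, 2) = g.1 q + g.1 (q - e L 2) := rfl

theorem Phi_fst (L : ℕ) (f : Fin 3 → ZMod L → ZMod 2) (p : V L) :
    (Phi L f).1 p = f 0 (p 0) + f 1 (p 1) := rfl

theorem Phi_snd (L : ℕ) (f : Fin 3 → ZMod L → ZMod 2) (p : V L) :
    (Phi L f).2 p = f 0 (p 0) + f 2 (p 2) := rfl

section
variable (L : ℕ) [NeZero L]

theorem coord_free (g : V L → ZMod 2) (i : Fin 3) (hg : ∀ q, g (q - e L i) = g q)
    (p q : V L) (h : ∀ j, j ≠ i → p j = q j) : g p = g q := by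
  have hg' : ∀ r, g (r + e L i) = g r := by
    intro r
    have := hg (r + e L i)
    rw [add_sub_cancel_right] at this
    exact this.symm
  have step : ∀ (n : ℕ) (r : V L), g (r + (n : ZMod L) • e L i) = g r := by
    intro n
    induction n with
    | zero => intro r; simp
    | succ m ih =>
        intro r
        have hsm : ((m + 1 : ℕ) : ZMod L) • e L i
            = (m : ZMod L) • e L i + e L i := by
          push_cast
          rw [add_smul, one_smul]
        rw [hsm, ← add_assoc, hg', ih]
  obtain ⟨n, hn⟩ := ZMod.natCast_zmod_surjective (q i - p i)
  have hq : q = p + (n : ZMod L) • e L i := by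
    funext j
    by_cases hj : j = i
    · subst hj
      simp only [Pi.add_apply, Pi.smul_apply, e, Pi.single_eq_same, smul_eq_mul, mul_one, hn]
      ring
    · simp [e, Pi.single_eq_of_ne hj, h j hj]
  rw [hq, step]

theorem kerT_eq : LinearMap.ker (Tmap L) = LinearMap.range (Phi L) := by
  apply le_antisymm
  · intro g hg
    rw [LinearMap.mem_ker] at hg
    have hq : ∀ qi, Tmap L g qi = 0 := fun qi => congrFun hg qi
    have c0 : ∀ q, g.1 q + g.1 (q - e L 0) + g.2 q + g.2 (q - e L 0) = 0 := fun q => by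
      rw [← Tmap_a0]; exact hq (q, 0)
    have c1 : ∀ q, g.2 q + g.2 (q - e L 1) = 0 := fun q => by
      rw [← Tmap_a1]; exact hq (q, 1)
    have c2 : ∀ q, g.1 q + g.1 (q - e L 2) = 0 := fun q => by
      rw [← Tmap_a2]; exact hq (q, 2)
    have flip : ∀ a b : ZMod 2, a + b = 0 → b = a := by decide
    have flip4 : ∀ a b c d : ZMod 2, a + b + c + d = 0 → (b + d) = (a + c) := by decide
    have d2 : ∀ q, g.1 (q - e L 2) = g.1 q := fun q => flip _ _ (c2 q)
    have d1 : ∀ q, g.2 (q - e L 1) = g.2 q := fun q => flip _ _ (c1 q)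
    have d0 : ∀ q, (fun r => g.1 r + g.2 r) (q - e L 0) = (fun r => g.1 r + g.2 r) q :=
      fun q => flip4 _ _ _ _ (c0 q)
    have I2 := coord_free L g.1 2 d2
    have I1 := coord_free L g.2 1 d1
    have I0 := coord_free L (fun r => g.1 r + g.2 r) 0 d0
    refine ⟨![fun t => g.2 (t • e L 0), fun s => g.1 (s • e L 1) + g.2 0,
      fun u => g.2 (u • e L 2) + g.2 0], ?_⟩
    have ecoord : ∀ (c : ZMod L) (i j : Fin 3), (c • e L i) j = if j = i then c else 0 := by
      intro c i j
      by_cases h : j = i <;> simp [e, Pi.single_apply, h]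
    refine Prod.ext ?_ ?_ <;> funext p
    · -- first component
      set A := (p 0) • e L 0 with hA
      set B := (p 1) • e L 1 with hB
      have step1 : g.1 p = g.1 (A + B) := by
        refine I2 p (A + B) fun j hj => ?_
        fin_cases j
        · simp [hA, hB, ecoord]
        · simp [hA, hB, ecoord]
        · exact absurd rfl hj
      have step2 : g.1 (A + B) + g.2 (A + B) = g.1 B + g.2 B := by
        refine I0 (A + B) B fun j hj => ?_
        fin_cases j
        · exact absurd rfl hj
        · simp [hA, hB, ecoord]
        · simp [hA, hB, ecoord]
      have step3 : g.2 (A + B) = g.2 A := by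
        refine I1 (A + B) A fun j hj => ?_
        fin_cases j
        · simp [hA, hB, ecoord]
        · exact absurd rfl hj
        · simp [hA, hB, ecoord]
      have step4 : g.2 B = g.2 0 := by
        refine I1 B 0 fun j hj => ?_
        fin_cases j
        · simp [hA, hB, ecoord]
        · exact absurd rfl hj
        · simp [hA, hB, ecoord]
      rw [step3, step4] at step2
      have key : ∀ a b c d : ZMod 2, a + b = c + d → b + (c + d) = a := by decide
      show g.2 ((p 0) • e L 0) + (g.1 ((p 1) • e L 1) + g.2 0) = g.1 p
      rw [step1, ← hA, ← hB]
      exact key _ _ _ _ step2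
    · -- second component
      set A := (p 0) • e L 0 with hA
      set C := (p 2) • e L 2 with hC
      have t1 : g.2 p = g.2 (A + C) := by
        refine I1 p (A + C) fun j hj => ?_
        fin_cases j
        · simp [hA, hC, ecoord]
        · exact absurd rfl hj
        · simp [hA, hC, ecoord]
      have t2 : g.1 (A + C) + g.2 (A + C) = g.1 C + g.2 C := by
        refine I0 (A + C) C fun j hj => ?_
        fin_cases j
        · exact absurd rfl hj
        · simp [hA, hC, ecoord]
        · simp [hA, hC, ecoord]
      have t3 : g.1 (A + C) = g.1 A := by
        refine I2 (A + C) A fun j hj => ?_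
        fin_cases j
        · simp [hA, hC, ecoord]
        · simp [hA, hC, ecoord]
        · exact absurd rfl hj
      have t4 : g.1 C = g.1 0 := by
        refine I2 C 0 fun j hj => ?_
        fin_cases j
        · simp [hA, hC, ecoord]
        · simp [hA, hC, ecoord]
        · exact absurd rfl hj
      have t5 : g.1 A + g.2 A = g.1 0 + g.2 0 := by
        refine I0 A 0 fun j hj => ?_
        fin_cases j
        · exact absurd rfl hj
        · simp [hA, ecoord]
        · simp [hA, ecoord]
      rw [t3, t4] at t2
      have key : ∀ a b c d f k : ZMod 2,
          a + c = d + f → a + b = d + k → b + (f + k) = c := by decide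
      show g.2 ((p 0) • e L 0) + (g.2 ((p 2) • e L 2) + g.2 0) = g.2 p
      rw [t1, ← hA, ← hC]
      exact key _ _ _ _ _ _ t2 t5
  · rintro _ ⟨f, rfl⟩
    rw [LinearMap.mem_ker]
    funext qi
    obtain ⟨q, i⟩ := qi
    have sub_coord : ∀ (i j : Fin 3), i ≠ j → (q - e L i) j = q j := by
      intro i j h
      simp [e, Pi.single_eq_of_ne (Ne.symm h)]
    have zchar : ∀ a b c d : ZMod 2, (a + b) + (c + b) + (a + d) + (c + d) = 0 := by decide
    have zchar2 : ∀ a b : ZMod 2, (a + b) + (a + b) = 0 := by decide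
    have trip : ∀ (j : Fin 3), j = 0 ∨ j = 1 ∨ j = 2 := by decide
    rcases trip i with rfl | rfl | rfl
    · rw [Pi.zero_apply, Tmap_a0, Phi_fst, Phi_fst, Phi_snd, Phi_snd,
        sub_coord 0 1 (by decide), sub_coord 0 2 (by decide)]
      exact zchar _ _ _ _
    · rw [Pi.zero_apply, Tmap_a1, Phi_snd, Phi_snd,
        sub_coord 1 0 (by decide), sub_coord 1 2 (by decide)]
      exact zchar2 _ _
    · rw [Pi.zero_apply, Tmap_a2, Phi_fst, Phi_fst,
        sub_coord 2 0 (by decide), sub_coord 2 1 (by decide)]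
      exact zchar2 _ _

end
section
variable (L : ℕ) [NeZero L]

theorem kerPhi_eq :
    LinearMap.ker (Phi L)
      = Submodule.span (ZMod 2) {(fun _ _ => 1 : Fin 3 → ZMod L → ZMod 2)} := by
  apply le_antisymm
  · intro f hf
    rw [LinearMap.mem_ker] at hf
    have h1 : ∀ p : V L, f 0 (p 0) + f 1 (p 1) = 0 := fun p => by
      rw [← Phi_fst, hf]; rfl
    have h2 : ∀ p : V L, f 0 (p 0) + f 2 (p 2) = 0 := fun p => by
      rw [← Phi_snd, hf]; rfl
    have e1 : ∀ t s : ZMod L, f 0 t + f 1 s = 0 := fun t s => by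
      have := h1 ![t, s, 0]
      simpa using this
    have e2 : ∀ t u : ZMod L, f 0 t + f 2 u = 0 := fun t u => by
      have := h2 ![t, 0, u]
      simpa using this
    have flip : ∀ a b : ZMod 2, a + b = 0 → b = a := by decide
    have same : ∀ a b c : ZMod 2, a + c = 0 → b + c = 0 → a = b := by decide
    rw [Submodule.mem_span_singleton]
    refine ⟨f 0 0, ?_⟩
    have k1 : ∀ t, f 0 t = f 0 0 := fun t => same _ _ _ (e1 t 0) (e1 0 0)
    have k2 : ∀ t, f 1 t = f 0 0 := fun t => flip _ _ (e1 0 t)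
    have k3 : ∀ t, f 2 t = f 0 0 := fun t => flip _ _ (e2 0 t)
    funext i t
    have trip : ∀ (j : Fin 3), j = 0 ∨ j = 1 ∨ j = 2 := by decide
    rcases trip i with rfl | rfl | rfl
    · simp [k1 t]
    · simp [k2 t]
    · simp [k3 t]
  · rw [Submodule.span_le, Set.singleton_subset_iff]
    rw [SetLike.mem_coe, LinearMap.mem_ker]
    have one_one : (1 : ZMod 2) + 1 = 0 := by decide
    refine Prod.ext ?_ ?_ <;> funext p <;>
      simp only [Prod.fst_zero, Prod.snd_zero, Pi.zero_apply, Phi_fst, Phi_snd] <;>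
      exact one_one

theorem finrank_domPhi : finrank (ZMod 2) (Fin 3 → ZMod L → ZMod 2) = 3 * L := by
  rw [Module.finrank_pi_fintype, Fin.sum_univ_three, Module.finrank_pi, ZMod.card]
  ring

theorem finrank_kerPhi : finrank (ZMod 2) (LinearMap.ker (Phi L)) = 1 := by
  rw [kerPhi_eq]
  refine finrank_span_singleton ?_
  intro h
  have := congrFun (congrFun h 0) 0
  simp at this

theorem finrank_range_Phi : finrank (ZMod 2) (LinearMap.range (Phi L)) = 3 * L - 1 := by
  have h := LinearMap.finrank_range_add_finrank_ker (Phi L)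
  rw [finrank_domPhi, finrank_kerPhi] at h
  omega

end

noncomputable def iotaB (L : ℕ) [NeZero L] :
    ((V L → ZMod 2) × (V L → ZMod 2))
      ≃ₗ[ZMod 2] Module.Dual (ZMod 2) ((V L → ZMod 2) × (V L → ZMod 2)) :=
  (LinearEquiv.prodCongr (piDual (V L)) (piDual (V L))).trans
    (Module.dualProdDualEquivDual (ZMod 2) (V L → ZMod 2) (V L → ZMod 2))

theorem comm_square (L : ℕ) [NeZero L] :
    (cellSynMap L).dualMap.comp (iotaB L).toLinearMap
      = (piDual (V L × Fin 3)).toLinearMap.comp (Tmap L) := by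
  refine LinearMap.ext fun g => LinearMap.ext fun F => ?_
  simp only [LinearMap.comp_apply, LinearEquiv.coe_coe, LinearMap.dualMap_apply]
  have hlhs : (iotaB L g) (cellSynMap L F)
      = piDual (V L) g.1 (cellSyn L F 1) + piDual (V L) g.2 (cellSyn L F 2) := rfl
  rw [hlhs, piDual_apply, piDual_apply, piDual_apply]
  exact star_identity L g F

theorem finrank_B (L : ℕ) [NeZero L] :
    Module.finrank (ZMod 2) ((V L → ZMod 2) × (V L → ZMod 2)) = L ^ 3 + L ^ 3 := by
  rw [Module.finrank_prod, Module.finrank_pi]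
  have hc : Fintype.card (V L) = L ^ 3 := by
    simp [Fintype.card_fun, ZMod.card]
  rw [hc]

/-- The cell syndrome map `F ↦ (σ₁(F), σ₂(F))` has rank `2L³ − 3L + 1`,
giving `6L − 3` encoded logical qubits for the X-cube model. -/
theorem stmt_15 (L : ℕ) [NeZero L] (hL : 2 ≤ L) :
    Module.finrank (ZMod 2) (LinearMap.range (cellSynMap L)) = 2 * L ^ 3 - 3 * L + 1 := by
  have hrange : LinearMap.range ((cellSynMap L).dualMap)
      = Submodule.map (piDual (V L × Fin 3)).toLinearMap (LinearMap.range (Tmap L)) := by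
    conv_lhs => rw [← LinearMap.range_comp_of_range_eq_top ((cellSynMap L).dualMap)
      (LinearEquiv.range (iotaB L))]
    rw [comm_square L, LinearMap.range_comp]
  have h1 : finrank (ZMod 2) (LinearMap.range (cellSynMap L))
      = finrank (ZMod 2) (LinearMap.range (Tmap L)) := by
    rw [← LinearMap.finrank_range_dualMap_eq_finrank_range (cellSynMap L), hrange]
    exact LinearEquiv.finrank_map_eq (piDual (V L × Fin 3)) _
  have h2 := LinearMap.finrank_range_add_finrank_ker (Tmap L)
  rw [finrank_B L, kerT_eq L, finrank_range_Phi L] at h2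
  rw [h1]
  have hA : L ≤ L ^ 3 := Nat.le_self_pow (by norm_num) L
  have hB : 2 * L ≤ L ^ 3 := by
    calc 2 * L ≤ L * L := Nat.mul_le_mul_right L hL
    _ ≤ L ^ 3 := by nlinarith
  set M := L ^ 3 with hM
  omega
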